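/- arXiv:2003.06152 — 2 statements merged into one kernel-verified Lean document; each statement's English description precedes it below -/
import Mathlib

section
/- Let W = {w ∈ ℝ² : ‖w‖ ≤ 5}. There exist absolute constants c₁, c₂ > 0 with the following property: for every regularizer r : W → ℝ that is 1-Lipschitz and λ-strongly convex, there exist a nonnegative convex function F : W → ℝ that is 1-Lipschitz and has 1-Lipschitz gradient, and a point w_r ∈ W, such that for every horizon T and step size η with 1/T² < η < 1 and T ≥ c₁/(λη), the averaged gradient-descent iterate w_F on F satisfies F(w_r) ≤ F(w_F) and r(w_r) ≤ r(w_F) − c₂·λ. -/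
/- STATEMENT 0: no distribution-independent strongly convex implicit regularizer for GD.
   GD on `F : W → ℝ` (W = closed ball of radius 5 in ℝ²) with step size η starts at
   w⁽¹⁾ = 0, iterates w⁽ᵗ⁺¹⁾ = Π_W(w⁽ᵗ⁾ − η∇F(w⁽ᵗ⁾)), and outputs the average of
   w⁽¹⁾, …, w⁽ᵀ⁾. -/

open scoped RealInnerProductSpace
open MeasureTheory Metric

noncomputable section

abbrev Euc (d : ℕ) := EuclideanSpace ℝ (Fin d)

/-- Euclidean projection onto the closed ball of radius `R` centered at the origin. -/
def projB {d : ℕ} (R : ℝ) (w : Euc d) : Euc d := if ‖w‖ ≤ R then w else (R / ‖w‖) • w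

/-- `gdIter R η g t` is the `(t+1)`-st iterate `w⁽ᵗ⁺¹⁾` of projected gradient descent
(projection onto the ball of radius `R`), started at `w⁽¹⁾ = 0`, where `g t` is the
gradient field used at step `t`. -/
def gdIter {d : ℕ} (R η : ℝ) (g : ℕ → Euc d → Euc d) : ℕ → Euc d
  | 0 => 0
  | t + 1 => projB R (gdIter R η g t - η • g t (gdIter R η g t))

/-- The averaged iterate `(1/T) ∑_{t=1}^T w⁽ᵗ⁾`. -/
def gdAvg {d : ℕ} (R η : ℝ) (g : ℕ → Euc d → Euc d) (T : ℕ) : Euc d :=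
  (T : ℝ)⁻¹ • ∑ t ∈ Finset.range T, gdIter R η g t

/-- The output of gradient descent on the single function `F`, projected onto the
ball of radius 5, after `T` steps with step size `η`. -/
def gdOut (F : Euc 2 → ℝ) (η : ℝ) (T : ℕ) : Euc 2 :=
  gdAvg 5 η (fun _ w => gradient F w) T

/-- `r` is `λ`-strongly convex on `W`:
`r(w₁) ≥ r(w₂) + ⟨∇r(w₂), w₁ − w₂⟩ + λ‖w₁ − w₂‖²` for all `w₁, w₂ ∈ W`. -/
def StronglyConvexOn' (W : Set (Euc 2)) (lam : ℝ) (r : Euc 2 → ℝ) : Prop :=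
  ∀ w₁ ∈ W, ∀ w₂ ∈ W,
    r w₂ + (inner ℝ (gradient r w₂) (w₁ - w₂) : ℝ) + lam * ‖w₁ - w₂‖ ^ 2 ≤ r w₁


/- ======== clamp/Phi ======== -/
def clampI (M t : ℝ) : ℝ := min (max t 0) M
def Phi (M u : ℝ) : ℝ := ∫ t in (0:ℝ)..u, clampI M t

lemma clampI_nonneg {M : ℝ} (hM : 0 ≤ M) (t : ℝ) : 0 ≤ clampI M t := le_min (le_max_right _ _) hM
lemma clampI_le {M : ℝ} (t : ℝ) : clampI M t ≤ M := min_le_right _ _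
lemma clampI_continuous {M : ℝ} : Continuous (clampI M) := by unfold clampI; fun_prop
lemma clampI_monotone {M : ℝ} : Monotone (clampI M) := fun a b hab => by
  unfold clampI; exact min_le_min (max_le_max hab le_rfl) le_rfl
lemma lipschitzWith_clampI {M : ℝ} : LipschitzWith 1 (clampI M) := by
  have h1 : LipschitzWith 1 (fun t : ℝ => max t 0) := LipschitzWith.max_const LipschitzWith.id 0
  have h2 : LipschitzWith 1 (fun t : ℝ => min t M) := LipschitzWith.min_const LipschitzWith.id M
  have h3 := h2.comp h1; rw [mul_one] at h3; exact h3
lemma clampI_abs_sub_le {M : ℝ} (a b : ℝ) : |clampI M a - clampI M b| ≤ |a - b| := by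
  have := lipschitzWith_clampI (M := M).dist_le_mul a b
  simpa [Real.dist_eq] using this
lemma clampI_eq_self {M t : ℝ} (h0 : 0 ≤ t) (hM : t ≤ M) : clampI M t = t := by
  unfold clampI; rw [max_eq_left h0, min_eq_left hM]
lemma clampI_eq_max {t : ℝ} (h : t ≤ 1) : clampI 1 t = max t 0 := by
  unfold clampI; rw [min_eq_left (le_trans (max_le h zero_le_one) le_rfl)]
lemma hasDerivAt_Phi {M : ℝ} (u : ℝ) : HasDerivAt (Phi M) (clampI M u) u := by
  apply intervalIntegral.integral_hasDerivAt_right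
  · exact (clampI_continuous (M := M)).intervalIntegrable _ _
  · exact (clampI_continuous (M := M)).stronglyMeasurableAtFilter _ _
  · exact (clampI_continuous (M := M)).continuousAt
lemma Phi_zero_of_nonpos {M : ℝ} (hM : 0 ≤ M) {u : ℝ} (hu : u ≤ 0) : Phi M u = 0 := by
  unfold Phi
  rw [intervalIntegral.integral_congr (g := fun _ => (0:ℝ)), intervalIntegral.integral_zero]
  intro t ht
  have ht0 : t ≤ 0 := by
    rcases Set.mem_uIcc.1 ht with h | h
    · exact le_trans h.2 hu
    · exact h.2
  simp [clampI, max_eq_right ht0, min_eq_left hM]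
lemma Phi_nonneg {M : ℝ} (hM : 0 ≤ M) (u : ℝ) : 0 ≤ Phi M u := by
  rcases le_or_gt u 0 with h | h
  · rw [Phi_zero_of_nonpos hM h]
  · unfold Phi
    apply intervalIntegral.integral_nonneg h.le
    intro t _; exact clampI_nonneg hM t
lemma Phi_lipschitz {M : ℝ} (hM : 0 ≤ M) (a b : ℝ) : |Phi M a - Phi M b| ≤ M * |a - b| := by
  have hii : ∀ x y : ℝ, IntervalIntegrable (clampI M) volume x y := fun x y =>
    (clampI_continuous (M := M)).intervalIntegrable _ _
  have heq : Phi M a - Phi M b = ∫ t in b..a, clampI M t :=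
    intervalIntegral.integral_interval_sub_left (hii 0 a) (hii 0 b)
  rw [heq]
  calc |∫ t in b..a, clampI M t| = ‖∫ t in b..a, clampI M t‖ := rfl
    _ ≤ M * |a - b| := by
        apply intervalIntegral.norm_integral_le_of_norm_le_const
        intro x _
        rw [Real.norm_eq_abs, abs_of_nonneg (clampI_nonneg hM x)]
        exact clampI_le x
lemma Phi_convex {M : ℝ} : ConvexOn ℝ Set.univ (Phi M) := by
  have hdiff : Differentiable ℝ (Phi M) := fun u => (hasDerivAt_Phi u).differentiableAt
  have hderiv : deriv (Phi M) = clampI M := funext fun u => (hasDerivAt_Phi u).deriv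
  exact Monotone.convexOn_univ_of_deriv hdiff (hderiv ▸ clampI_monotone)

/- ======== vectors ======== -/
def vec2 (a b : ℝ) : Euc 2 := (WithLp.equiv 2 (Fin 2 → ℝ)).symm ![a, b]
@[simp] lemma vec2_apply0 (a b : ℝ) : vec2 a b 0 = a := rfl
@[simp] lemma vec2_apply1 (a b : ℝ) : vec2 a b 1 = b := rfl
lemma euc_norm_sq (w : Euc 2) : ‖w‖ ^ 2 = (w 0) ^ 2 + (w 1) ^ 2 := by
  rw [EuclideanSpace.norm_eq, Real.sq_sqrt (by positivity)]
  simp [Fin.sum_univ_two, sq_abs]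
lemma euc_norm_le {w : Euc 2} {c : ℝ} (hc : 0 ≤ c) (h : (w 0) ^ 2 + (w 1) ^ 2 ≤ c ^ 2) :
    ‖w‖ ≤ c := by nlinarith [euc_norm_sq w, norm_nonneg w]
lemma euc_ext (x y : Euc 2) (h0 : x 0 = y 0) (h1 : x 1 = y 1) : x = y := by
  apply PiLp.ext; intro i; fin_cases i <;> assumption
lemma abs_le_norm0 (w : Euc 2) : |w 0| ≤ ‖w‖ := by
  nlinarith [euc_norm_sq w, norm_nonneg w, sq_nonneg (w 1), abs_nonneg (w 0), sq_abs (w 0)]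
lemma abs_le_norm1 (w : Euc 2) : |w 1| ≤ ‖w‖ := by
  nlinarith [euc_norm_sq w, norm_nonneg w, sq_nonneg (w 0), abs_nonneg (w 1), sq_abs (w 1)]
lemma euc_inner (v w : Euc 2) : (inner ℝ v w : ℝ) = v 0 * w 0 + v 1 * w 1 := by
  rw [PiLp.inner_apply]; simp [Fin.sum_univ_two, mul_comm]
lemma sum_apply0 (n : ℕ) (f : ℕ → Euc 2) :
    (∑ t ∈ Finset.range n, f t) 0 = ∑ t ∈ Finset.range n, f t 0 := by
  induction n with
  | zero => simp
  | succ n ih => rw [Finset.sum_range_succ, Finset.sum_range_succ, ← ih]; simp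
lemma sum_apply1 (n : ℕ) (f : ℕ → Euc 2) :
    (∑ t ∈ Finset.range n, f t) 1 = ∑ t ∈ Finset.range n, f t 1 := by
  induction n with
  | zero => simp
  | succ n ih => rw [Finset.sum_range_succ, Finset.sum_range_succ, ← ih]; simp

/- ======== the function F ======== -/
def qq (w : Euc 2) : ℝ := (24/25) * w 0 + (7/25) * w 1
def FF (μ : ℝ) (w : Euc 2) : ℝ := (1/50) * Phi 7 (2 - w 0) + μ * Phi 1 (3/5 - qq w)
def GG (μ : ℝ) (w : Euc 2) : Euc 2 :=
  vec2 (-((1/50) * clampI 7 (2 - w 0)) - μ * clampI 1 (3/5 - qq w) * (24/25))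
       (-(μ * clampI 1 (3/5 - qq w) * (7/25)))

lemma hasGradient_FF (μ : ℝ) (w : Euc 2) : HasGradientAt (FF μ) (GG μ w) w := by
  rw [hasGradientAt_iff_hasFDerivAt]
  have p0 : HasFDerivAt (fun v : Euc 2 => v 0) (EuclideanSpace.proj (0 : Fin 2) : Euc 2 →L[ℝ] ℝ) w :=
    (EuclideanSpace.proj (0 : Fin 2) : Euc 2 →L[ℝ] ℝ).hasFDerivAt
  have p1 : HasFDerivAt (fun v : Euc 2 => v 1) (EuclideanSpace.proj (1 : Fin 2) : Euc 2 →L[ℝ] ℝ) w :=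
    (EuclideanSpace.proj (1 : Fin 2) : Euc 2 →L[ℝ] ℝ).hasFDerivAt
  have hx : HasFDerivAt (fun v : Euc 2 => 2 - v 0)
      (-(EuclideanSpace.proj (0 : Fin 2) : Euc 2 →L[ℝ] ℝ)) w := p0.const_sub 2
  have hq : HasFDerivAt (fun v : Euc 2 => (3:ℝ)/5 - qq v)
      (-((24/25 : ℝ) • (EuclideanSpace.proj (0 : Fin 2) : Euc 2 →L[ℝ] ℝ)
         + (7/25 : ℝ) • (EuclideanSpace.proj (1 : Fin 2) : Euc 2 →L[ℝ] ℝ))) w :=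
    ((p0.const_mul (24/25 : ℝ)).add (p1.const_mul (7/25 : ℝ))).const_sub (3/5 : ℝ)
  have h1 := (hasDerivAt_Phi (M := 7) (2 - w 0)).comp_hasFDerivAt w hx
  have h2 :=
    (hasDerivAt_Phi (M := 1) ((3:ℝ)/5 - qq w)).comp_hasFDerivAt w hq
  have h3 := (h1.const_mul (1/50 : ℝ)).add (h2.const_mul μ)
  have heq : FF μ = fun v : Euc 2 => (1/50) * Phi 7 (2 - v 0) + μ * Phi 1 (3/5 - qq v) := rfl
  rw [heq]
  refine h3.congr_fderiv ?_
  ext v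
  simp [InnerProductSpace.toDual_apply_apply, PiLp.inner_apply, Fin.sum_univ_two, GG,
    ContinuousLinearMap.smul_apply, PiLp.proj_apply, RCLike.inner_apply]
  ring

lemma gradient_FF (μ : ℝ) (w : Euc 2) : gradient (FF μ) w = GG μ w :=
  (hasGradient_FF μ w).gradient

lemma FF_nonneg {μ : ℝ} (hμ : 0 ≤ μ) (w : Euc 2) : 0 ≤ FF μ w := by
  have h1 := Phi_nonneg (by norm_num : (0:ℝ) ≤ 7) (2 - w 0)
  have h2 := Phi_nonneg (by norm_num : (0:ℝ) ≤ 1) (3/5 - qq w)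
  have : 0 ≤ μ * Phi 1 (3/5 - qq w) := mul_nonneg hμ h2
  unfold FF; nlinarith

lemma FF_convex {μ : ℝ} (hμ : 0 ≤ μ) : ConvexOn ℝ Set.univ (FF μ) := by
  constructor
  · exact convex_univ
  · intro x _ y _ a b ha hb hab
    have e0 : (a • x + b • y) 0 = a * x 0 + b * y 0 := by simp
    have e1 : (a • x + b • y) 1 = a * x 1 + b * y 1 := by simp
    have hq : qq (a • x + b • y) = a * qq x + b * qq y := by
      unfold qq; rw [e0, e1]; ring
    have harg1 : 2 - (a • x + b • y) 0 = a * (2 - x 0) + b * (2 - y 0) := by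
      rw [e0]; nlinarith [hab]
    have harg2 : (3:ℝ)/5 - qq (a • x + b • y) = a * (3/5 - qq x) + b * (3/5 - qq y) := by
      rw [hq]; nlinarith [hab]
    have c1 := Phi_convex (M := 7).2 (Set.mem_univ (2 - x 0)) (Set.mem_univ (2 - y 0)) ha hb hab
    have c2 := Phi_convex (M := 1).2 (Set.mem_univ (3/5 - qq x)) (Set.mem_univ (3/5 - qq y)) ha hb hab
    unfold FF
    rw [harg1, harg2]
    simp only [smul_eq_mul] at c1 c2 ⊢
    nlinarith [mul_le_mul_of_nonneg_left c2 hμ]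

lemma qq_lip (x y : Euc 2) : |qq x - qq y| ≤ ‖x - y‖ := by
  have h0 : (x - y) 0 = x 0 - y 0 := by simp
  have h1 : (x - y) 1 = x 1 - y 1 := by simp
  have hq : qq x - qq y = (24/25) * (x 0 - y 0) + (7/25) * (x 1 - y 1) := by unfold qq; ring
  have hn : ‖x - y‖ ^ 2 = (x 0 - y 0) ^ 2 + (x 1 - y 1) ^ 2 := by rw [euc_norm_sq, h0, h1]
  rw [hq]
  apply abs_le_of_sq_le_sq _ (norm_nonneg _)
  rw [hn]
  nlinarith [sq_nonneg (7 * (x 0 - y 0) - 24 * (x 1 - y 1))]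

lemma coord0_lip (x y : Euc 2) : |x 0 - y 0| ≤ ‖x - y‖ := by
  have h0 : (x - y) 0 = x 0 - y 0 := by simp
  have := abs_le_norm0 (x - y); rwa [h0] at this

lemma FF_lip {μ : ℝ} (hμ0 : 0 ≤ μ) (hμ : μ ≤ 4/5) : LipschitzWith 1 (FF μ) := by
  apply LipschitzWith.of_dist_le_mul
  intro x y
  rw [Real.dist_eq, dist_eq_norm]
  have l1 := Phi_lipschitz (by norm_num : (0:ℝ) ≤ 7) (2 - x 0) (2 - y 0)
  have l2 := Phi_lipschitz (by norm_num : (0:ℝ) ≤ 1) (3/5 - qq x) (3/5 - qq y)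
  have e1 : |(2 - x 0) - (2 - y 0)| = |x 0 - y 0| := by rw [← abs_neg]; ring_nf
  have e2 : |(3/5 - qq x) - (3/5 - qq y)| = |qq x - qq y| := by rw [← abs_neg]; ring_nf
  rw [e1] at l1; rw [e2] at l2
  have hc := coord0_lip x y
  have hqq := qq_lip x y
  have habs : |FF μ x - FF μ y| ≤ (1/50) * |Phi 7 (2 - x 0) - Phi 7 (2 - y 0)|
      + μ * |Phi 1 (3/5 - qq x) - Phi 1 (3/5 - qq y)| := by
    unfold FF
    calc |(1/50) * Phi 7 (2 - x 0) + μ * Phi 1 (3/5 - qq x)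
        - ((1/50) * Phi 7 (2 - y 0) + μ * Phi 1 (3/5 - qq y))|
        = |(1/50) * (Phi 7 (2 - x 0) - Phi 7 (2 - y 0))
           + μ * (Phi 1 (3/5 - qq x) - Phi 1 (3/5 - qq y))| := by ring_nf
      _ ≤ |(1/50) * (Phi 7 (2 - x 0) - Phi 7 (2 - y 0))|
           + |μ * (Phi 1 (3/5 - qq x) - Phi 1 (3/5 - qq y))| := abs_add_le _ _
      _ = (1/50) * |Phi 7 (2 - x 0) - Phi 7 (2 - y 0)|
           + μ * |Phi 1 (3/5 - qq x) - Phi 1 (3/5 - qq y)| := by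
          rw [abs_mul, abs_mul, abs_of_nonneg (by norm_num : (0:ℝ) ≤ 1/50), abs_of_nonneg hμ0]
  have hF : |FF μ x - FF μ y| ≤ (7/50) * ‖x - y‖ + μ * ‖x - y‖ := by
    have b1 : |Phi 7 (2 - x 0) - Phi 7 (2 - y 0)| ≤ 7 * ‖x - y‖ := le_trans l1 (by nlinarith)
    have b2 : |Phi 1 (3/5 - qq x) - Phi 1 (3/5 - qq y)| ≤ ‖x - y‖ := le_trans l2 (by nlinarith)
    nlinarith [mul_le_mul_of_nonneg_left b2 hμ0]
  rw [NNReal.coe_one, one_mul]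
  have hn : (0:ℝ) ≤ ‖x - y‖ := norm_nonneg _
  calc |FF μ x - FF μ y| ≤ (7/50) * ‖x - y‖ + μ * ‖x - y‖ := hF
    _ ≤ ‖x - y‖ := by nlinarith [mul_le_mul_of_nonneg_right hμ hn]

lemma GG_lip {μ : ℝ} (hμ0 : 0 ≤ μ) (hμ : μ ≤ 4/5) : LipschitzWith 1 (GG μ) := by
  apply LipschitzWith.of_dist_le_mul
  intro x y
  rw [dist_eq_norm, dist_eq_norm]
  set c7x := clampI 7 (2 - x 0)
  set c7y := clampI 7 (2 - y 0)
  set c1x := clampI 1 (3/5 - qq x)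
  set c1y := clampI 1 (3/5 - qq y)
  have d0 : (GG μ x - GG μ y) 0 = -(1/50) * (c7x - c7y) - μ * (24/25) * (c1x - c1y) := by
    simp [GG, c7x, c7y, c1x, c1y]; ring
  have d1 : (GG μ x - GG μ y) 1 = -(μ * (7/25)) * (c1x - c1y) := by
    simp [GG, c7x, c7y, c1x, c1y]; ring
  have h7 : |c7x - c7y| ≤ ‖x - y‖ := by
    have := clampI_abs_sub_le (M := 7) (2 - x 0) (2 - y 0)
    have e : |(2 - x 0) - (2 - y 0)| = |x 0 - y 0| := by rw [← abs_neg]; ring_nf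
    rw [e] at this
    exact le_trans this (coord0_lip x y)
  have h1 : |c1x - c1y| ≤ ‖x - y‖ := by
    have := clampI_abs_sub_le (M := 1) (3/5 - qq x) (3/5 - qq y)
    have e : |(3/5 - qq x) - (3/5 - qq y)| = |qq x - qq y| := by rw [← abs_neg]; ring_nf
    rw [e] at this
    exact le_trans this (qq_lip x y)
  rw [NNReal.coe_one, one_mul]
  apply euc_norm_le (norm_nonneg _)
  rw [d0, d1]
  set n := ‖x - y‖
  have hn : 0 ≤ n := norm_nonneg _
  have s7 : (c7x - c7y)^2 ≤ n^2 := by nlinarith [sq_abs (c7x - c7y), abs_nonneg (c7x - c7y)]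
  have s1 : (c1x - c1y)^2 ≤ n^2 := by nlinarith [sq_abs (c1x - c1y), abs_nonneg (c1x - c1y)]
  have sm : (c7x - c7y) * (c1x - c1y) ≤ n^2 := by
    nlinarith [abs_mul (c7x - c7y) (c1x - c1y), le_abs_self ((c7x - c7y) * (c1x - c1y)),
      mul_le_mul h7 h1 (abs_nonneg _) hn]
  have sm' : -((c7x - c7y) * (c1x - c1y)) ≤ n^2 := by
    nlinarith [abs_mul (c7x - c7y) (c1x - c1y), neg_abs_le ((c7x - c7y) * (c1x - c1y)),
      mul_le_mul h7 h1 (abs_nonneg _) hn]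
  have hμsq : μ^2 ≤ (4/5) * μ := by nlinarith
  have t1 : μ * ((c7x - c7y) * (c1x - c1y)) ≤ μ * n^2 := mul_le_mul_of_nonneg_left sm hμ0
  have t1' : μ * (-((c7x - c7y) * (c1x - c1y))) ≤ μ * n^2 := mul_le_mul_of_nonneg_left sm' hμ0
  have t2 : μ^2 * (c1x - c1y)^2 ≤ μ^2 * n^2 := mul_le_mul_of_nonneg_left s1 (sq_nonneg μ)
  have t3 : μ * n^2 ≤ (4/5) * n^2 := mul_le_mul_of_nonneg_right hμ (sq_nonneg n)
  have t4 : μ^2 * n^2 ≤ (4/5 * μ) * n^2 := mul_le_mul_of_nonneg_right hμsq (sq_nonneg n)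
  nlinarith [s7, t1, t1', t2, t3, t4, sq_nonneg n]
/- ===== pure real arithmetic helpers ===== -/
section Arith
variable {η μ X Y m : ℝ}

lemma arith_step (hη0 : 0 < η) (hη1 : η < 1) (hμ0 : 0 ≤ μ) (hμ1 : μ ≤ 4/5)
    (hx0 : 0 ≤ X) (hx2 : X ≤ 2) (hy0 : 0 ≤ Y) (hy35 : Y ≤ 3/5)
    (hm0 : 0 ≤ m) (hm35 : m ≤ 3/5) :
    0 ≤ X + η * ((1/50) * (2 - X) + μ * (24/25) * m)
    ∧ X + η * ((1/50) * (2 - X) + μ * (24/25) * m) ≤ 3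
    ∧ 0 ≤ Y + η * (μ * (7/25) * m)
    ∧ Y + η * (μ * (7/25) * m) ≤ 1 := by
  have hS0 : 0 ≤ (1/50) * (2 - X) + μ * (24/25) * m := by
    have t2 : 0 ≤ μ * (24/25) * m := by positivity
    nlinarith
  have hmu : μ * m ≤ (4/5) * (3/5) := mul_le_mul hμ1 hm35 hm0 (by norm_num)
  have hS1 : (1/50) * (2 - X) + μ * (24/25) * m ≤ 1 := by nlinarith
  have hT0 : 0 ≤ μ * (7/25) * m := by positivity
  refine ⟨by nlinarith, by nlinarith, by nlinarith, by nlinarith⟩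

lemma arith_x2 (hη0 : 0 < η) (hη1 : η < 1) (hμ0 : 0 ≤ μ) (hμ1 : μ ≤ 4/5)
    (hx0 : 0 ≤ X) (hx2 : X ≤ 2) (hm0 : 0 ≤ m) (hm35 : m ≤ 3/5)
    (hcase : m = 0 ∨ X ≤ 5/8) :
    X + η * ((1/50) * (2 - X) + μ * (24/25) * m) ≤ 2 := by
  have hmu : μ * m ≤ (4/5) * (3/5) := mul_le_mul hμ1 hm35 hm0 (by norm_num)
  rcases hcase with hm | hx
  · subst hm
    nlinarith
  · have hS0 : 0 ≤ (1/50) * (2 - X) + μ * (24/25) * m := by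
      have t2 : 0 ≤ μ * (24/25) * m := by positivity
      nlinarith
    have hS1 : (1/50) * (2 - X) + μ * (24/25) * m ≤ 1 := by nlinarith
    nlinarith

end Arith

/- ===== trajectory ===== -/
section Traj
variable {η μ : ℝ}

def W (η μ : ℝ) : ℕ → Euc 2 := gdIter 5 η (fun _ w => gradient (FF μ) w)

def mx (η μ : ℝ) (t : ℕ) : ℝ := max (3/5 - qq (W η μ t)) 0

lemma mx_nonneg (t : ℕ) : 0 ≤ mx η μ t := le_max_right _ _

structure TInv (η μ : ℝ) (t : ℕ) : Prop where
  x0 : 0 ≤ W η μ t 0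
  x2 : W η μ t 0 ≤ 2
  y0 : 0 ≤ W η μ t 1
  yq : W η μ t 1 ≤ (7/25) * qq (W η μ t)

namespace TInv

lemma q0 (h : TInv η μ t) : 0 ≤ qq (W η μ t) := by
  have := h.x0; have := h.y0; unfold qq; positivity

lemma y35 (h : TInv η μ t) : W η μ t 1 ≤ 3/5 := by
  have hq := h.yq; have hx := h.x2; unfold qq at hq; linarith

lemma q21 (h : TInv η μ t) : qq (W η μ t) ≤ 21/10 := by
  have := h.x2; have := h.y35; have := h.y0; unfold qq; linarith

lemma mx35 (h : TInv η μ t) : mx η μ t ≤ 3/5 := by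
  have := h.q0; unfold mx; apply max_le <;> linarith

end TInv

lemma tinv_zero : TInv η μ 0 := by
  constructor <;> simp [W, gdIter, qq]

variable (hη0 : 0 < η) (hη1 : η < 1) (hμ0 : 0 ≤ μ) (hμ1 : μ ≤ 4/5)
include hη0 hη1 hμ0 hμ1

lemma step_eq {t : ℕ} (h : TInv η μ t) :
    W η μ (t+1) = vec2
      (W η μ t 0 + η * ((1/50) * (2 - W η μ t 0) + μ * (24/25) * mx η μ t))
      (W η μ t 1 + η * (μ * (7/25) * mx η μ t)) := by
  have hgrad : gradient (FF μ) (W η μ t) = GG μ (W η μ t) := gradient_FF μ (W η μ t)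
  have hc7 : clampI 7 (2 - W η μ t 0) = 2 - W η μ t 0 :=
    clampI_eq_self (by linarith [h.x2]) (by linarith [h.x0])
  have hc1 : clampI 1 (3/5 - qq (W η μ t)) = mx η μ t := by
    rw [clampI_eq_max (by linarith [h.q0])]; rfl
  have hW : W η μ (t+1) = projB 5 (W η μ t - η • gradient (FF μ) (W η μ t)) := by
    conv_lhs => rw [W, gdIter]
    rw [W]
  rw [hgrad] at hW
  set u := W η μ t - η • GG μ (W η μ t) with hu
  have hg0 : GG μ (W η μ t) 0
      = -((1/50) * (2 - W η μ t 0)) - μ * mx η μ t * (24/25) := by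
    rw [GG, vec2_apply0, hc7, hc1]
  have hg1 : GG μ (W η μ t) 1 = -(μ * mx η μ t * (7/25)) := by
    rw [GG, vec2_apply1, hc1]
  have hu0 : u 0 = W η μ t 0 + η * ((1/50) * (2 - W η μ t 0) + μ * (24/25) * mx η μ t) := by
    have : u 0 = W η μ t 0 - η * GG μ (W η μ t) 0 := by rw [hu]; simp
    rw [this, hg0]; ring
  have hu1 : u 1 = W η μ t 1 + η * (μ * (7/25) * mx η μ t) := by
    have : u 1 = W η μ t 1 - η * GG μ (W η μ t) 1 := by rw [hu]; simp
    rw [this, hg1]; ring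
  obtain ⟨hb00, hb03, hb10, hb11⟩ :=
    arith_step hη0 hη1 hμ0 hμ1 h.x0 h.x2 h.y0 h.y35
      (mx_nonneg (η := η) (μ := μ) t) h.mx35
  have hnorm : ‖u‖ ≤ 5 := by
    apply euc_norm_le (by norm_num)
    rw [hu0, hu1]
    nlinarith [hb00, hb03, hb10, hb11]
  rw [hW, projB, if_pos hnorm]
  exact euc_ext _ _ (by rw [hu0, vec2_apply0]) (by rw [hu1, vec2_apply1])

lemma tinv_succ {t : ℕ} (h : TInv η μ t) : TInv η μ (t+1) := by
  have hs := step_eq hη0 hη1 hμ0 hμ1 h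
  have hmx0 := mx_nonneg (η := η) (μ := μ) t
  have hmx35 := h.mx35
  have hx0 := h.x0; have hx2 := h.x2; have hy0 := h.y0; have hyq := h.yq
  have hq0 := h.q0; have hy35 := h.y35
  have hS0 : 0 ≤ (1/50) * (2 - W η μ t 0) + μ * (24/25) * mx η μ t := by
    have t1 : 0 ≤ (1/50) * (2 - W η μ t 0) := by linarith
    have t2 : 0 ≤ μ * (24/25) * mx η μ t := by positivity
    linarith
  constructor
  · rw [hs]; simp only [vec2_apply0]
    nlinarith
  · rw [hs]; simp only [vec2_apply0]
    rcases le_or_gt (3/5 - qq (W η μ t)) 0 with hq | hq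
    · have hmz : mx η μ t = 0 := max_eq_right hq
      rw [hmz] at hS0 ⊢
      nlinarith
    · -- q < 3/5 hence x ≤ 5/8
      have hxs : W η μ t 0 ≤ 5/8 := by
        unfold qq at hq; linarith
      have hmm : mx η μ t = 3/5 - qq (W η μ t) := max_eq_left (by linarith)
      have hC : (1/50) * (2 - W η μ t 0) + μ * (24/25) * mx η μ t ≤ 1 := by
        have t2 : μ * (24/25) * mx η μ t ≤ (4/5) * (24/25) * (3/5) := by
          have := mul_le_mul hμ1 hmx35 hmx0 (by norm_num : (0:ℝ) ≤ 4/5)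
          nlinarith
        linarith
      nlinarith
  · rw [hs]; simp only [vec2_apply1]
    have : 0 ≤ η * (μ * (7/25) * mx η μ t) := by positivity
    linarith
  · rw [hs]; simp only [vec2_apply1, vec2_apply0]
    have hQ' : qq (vec2
        (W η μ t 0 + η * ((1/50) * (2 - W η μ t 0) + μ * (24/25) * mx η μ t))
        (W η μ t 1 + η * (μ * (7/25) * mx η μ t)))
        = qq (W η μ t) + (12/625) * η * (2 - W η μ t 0) + η * μ * mx η μ t := by
      unfold qq; simp only [vec2_apply0, vec2_apply1]; ring
    rw [hQ']
    nlinarith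
lemma tinv (t : ℕ) : TInv η μ t := by
  induction t with
  | zero => exact tinv_zero
  | succ t ih => exact tinv_succ hη0 hη1 hμ0 hμ1 ih

lemma x_step (t : ℕ) :
    W η μ (t+1) 0 = W η μ t 0 + η * ((1/50) * (2 - W η μ t 0) + μ * (24/25) * mx η μ t) := by
  rw [step_eq hη0 hη1 hμ0 hμ1 (tinv hη0 hη1 hμ0 hμ1 t), vec2_apply0]

lemma y_step (t : ℕ) :
    W η μ (t+1) 1 = W η μ t 1 + η * (μ * (7/25) * mx η μ t) := by
  rw [step_eq hη0 hη1 hμ0 hμ1 (tinv hη0 hη1 hμ0 hμ1 t), vec2_apply1]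

lemma q_step (t : ℕ) :
    qq (W η μ (t+1)) = qq (W η μ t) + (12/625) * η * (2 - W η μ t 0) + η * μ * mx η μ t := by
  unfold qq
  rw [x_step hη0 hη1 hμ0 hμ1 t, y_step hη0 hη1 hμ0 hμ1 t]
  ring

lemma y_mono {s t : ℕ} (hst : s ≤ t) : W η μ s 1 ≤ W η μ t 1 := by
  induction t with
  | zero => simp_all
  | succ t ih =>
    rcases Nat.lt_or_ge s (t+1) with hlt | hge
    · have h1 : W η μ s 1 ≤ W η μ t 1 := ih (Nat.lt_succ_iff.mp hlt)
      have h2 := y_step hη0 hη1 hμ0 hμ1 t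
      have h3 : 0 ≤ η * (μ * (7/25) * mx η μ t) := by
        have := mx_nonneg (η := η) (μ := μ) t
        positivity
      linarith
    · have : s = t + 1 := le_antisymm hst hge
      rw [this]

lemma x_decay (t : ℕ) : 2 - W η μ (t+1) 0 ≤ (2 - W η μ t 0) * (1 - η/50) := by
  have h1 := x_step hη0 hη1 hμ0 hμ1 t
  have h2 : 0 ≤ μ * (24/25) * mx η μ t := by
    have := mx_nonneg (η := η) (μ := μ) t
    positivity
  nlinarith [h2, hη0.le]

lemma x_geo (t : ℕ) : 2 - W η μ t 0 ≤ 2 * (1 - η/50)^t := by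
  induction t with
  | zero =>
    have : W η μ 0 0 = 0 := by simp [W, gdIter]
    rw [this]; norm_num
  | succ t ih =>
    have h1 := x_decay hη0 hη1 hμ0 hμ1 t
    have h2 : (0:ℝ) ≤ 1 - η/50 := by linarith
    have h3 : 0 ≤ 2 - W η μ t 0 := by linarith [(tinv hη0 hη1 hμ0 hμ1 t).x2]
    calc 2 - W η μ (t+1) 0 ≤ (2 - W η μ t 0) * (1 - η/50) := h1
      _ ≤ (2 * (1 - η/50)^t) * (1 - η/50) := by nlinarith
      _ = 2 * (1 - η/50)^(t+1) := by ring

lemma sum_d (T : ℕ) : ∑ t ∈ Finset.range T, (2 - W η μ t 0) ≤ 100 / η := by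
  have hρ0 : (0:ℝ) ≤ 1 - η/50 := by linarith
  have hρ1 : (1 - η/50 : ℝ) ≠ 1 := by
    intro h
    have : η = 0 := by linarith [sub_eq_iff_eq_add.mp h]
    exact absurd this (ne_of_gt hη0)
  have h1 : ∑ t ∈ Finset.range T, (2 - W η μ t 0)
      ≤ ∑ t ∈ Finset.range T, 2 * (1 - η/50)^t :=
    Finset.sum_le_sum fun t _ => x_geo hη0 hη1 hμ0 hμ1 t
  have h2 : ∑ t ∈ Finset.range T, (1 - η/50 : ℝ)^t
      = ((1 - η/50)^T - 1) / ((1 - η/50) - 1) := geom_sum_eq hρ1 T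
  have h3 : (0:ℝ) ≤ (1 - η/50)^T := pow_nonneg hρ0 T
  have h4 : ∑ t ∈ Finset.range T, (1 - η/50 : ℝ)^t ≤ 50 / η := by
    rw [h2]
    have he : ((1 - η/50 : ℝ)^T - 1) / ((1 - η/50) - 1) = (1 - (1 - η/50)^T) * (50/η) := by
      field_simp
      ring_nf
      rw [mul_inv_cancel₀ hη0.ne']; ring
    rw [he]
    have h50 : (0:ℝ) < 50 / η := by positivity
    nlinarith [h3, h50]
  calc ∑ t ∈ Finset.range T, (2 - W η μ t 0) ≤ ∑ t ∈ Finset.range T, 2 * (1 - η/50)^t := h1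
    _ = 2 * ∑ t ∈ Finset.range T, (1 - η/50)^t := by rw [Finset.mul_sum]
    _ ≤ 2 * (50 / η) := by nlinarith
    _ = 100 / η := by ring

lemma J_inv (t : ℕ) : (7/25) * qq (W η μ t) - (168/15625) * η * t ≤ W η μ t 1 := by
  induction t with
  | zero =>
    have h0 : W η μ 0 0 = 0 := by simp [W, gdIter]
    have h1 : W η μ 0 1 = 0 := by simp [W, gdIter]
    unfold qq; rw [h0, h1]; norm_num
  | succ t ih =>
    have hq := q_step hη0 hη1 hμ0 hμ1 t
    have hy := y_step hη0 hη1 hμ0 hμ1 t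
    have hX2 := (tinv hη0 hη1 hμ0 hμ1 t).x2
    have hX0 := (tinv hη0 hη1 hμ0 hμ1 t).x0
    have hcast : ((t:ℝ) + 1) = ((t+1 : ℕ) : ℝ) := by push_cast; ring
    rw [hq, hy, ← hcast]
    nlinarith [hη0.le]

lemma Q_lb (hμ4 : μ = 4/5) (t : ℕ) : min (3/10) ((6/25) * η * t) ≤ qq (W η μ t) := by
  subst hμ4
  induction t with
  | zero =>
    have h0 : qq (W η (4/5) 0) = 0 := by simp [W, gdIter, qq]
    rw [h0]
    exact le_trans (min_le_right _ _) (by norm_num)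
  | succ t ih =>
    have hq := q_step hη0 hη1 hμ0 hμ1 t
    have hX2 := (tinv hη0 hη1 hμ0 hμ1 t).x2
    have hq0 := (tinv hη0 hη1 hμ0 hμ1 t).q0
    have hmx0 := mx_nonneg (η := η) (μ := (4:ℝ)/5) t
    have hx2' : (0:ℝ) ≤ 2 - W η (4/5) t 0 := by linarith
    rcases le_or_gt (3/10) (qq (W η (4/5) t)) with hc | hc
    · have hmono : qq (W η (4/5) t) ≤ qq (W η (4/5) (t+1)) := by
        rw [hq]
        nlinarith [mul_nonneg hη0.le hx2', mul_nonneg (mul_nonneg hη0.le hμ0) hmx0]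
      exact le_trans (min_le_left _ _) (by linarith)
    · have hmx : mx η (4/5) t = 3/5 - qq (W η (4/5) t) := max_eq_left (by linarith)
      have hstep : (6/25) * η ≤ qq (W η (4/5) (t+1)) - qq (W η (4/5) t) := by
        rw [hq, hmx]
        have hd : (0:ℝ) ≤ 3/10 - qq (W η (4/5) t) := by linarith
        nlinarith [mul_nonneg hη0.le hx2', mul_nonneg hη0.le hd]
      have hge : min (3/10) ((6/25) * η * t) + (6/25) * η ≤ qq (W η (4/5) (t+1)) := by
        linarith [ih]
      have key : min (3/10) ((6/25) * η * ((t:ℝ)+1))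
          ≤ min (3/10) ((6/25) * η * (t:ℝ)) + (6/25) * η := by
        rcases le_total ((6/25) * η * (t:ℝ)) (3/10) with h | h
        · rw [min_eq_right h]
          calc min (3/10) ((6/25) * η * ((t:ℝ)+1)) ≤ (6/25) * η * ((t:ℝ)+1) :=
                min_le_right _ _
            _ = (6/25) * η * (t:ℝ) + (6/25) * η := by ring
        · rw [min_eq_left h]
          have h2 := min_le_left (3/10 : ℝ) ((6/25) * η * ((t:ℝ)+1))
          nlinarith [hη0.le]
      push_cast
      push_cast at hge
      linarith

lemma Y_lb (hμ4 : μ = 4/5) {t : ℕ} (ht : 5/(4*η) ≤ (t:ℝ)) (ht2 : (t:ℝ) * η ≤ 9/4) :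
    11/200 ≤ W η μ t 1 := by
  have hQ := Q_lb hη0 hη1 hμ0 hμ1 hμ4 t
  have hmin : min (3/10) ((6/25) * η * t) = 3/10 := by
    apply min_eq_left
    rw [div_le_iff₀ (by positivity : (0:ℝ) < 4 * η)] at ht
    nlinarith
  rw [hmin] at hQ
  have hJ := J_inv hη0 hη1 hμ0 hμ1 t
  nlinarith

lemma y_zero (hμz : μ = 0) (t : ℕ) : W η μ t 1 = 0 := by
  induction t with
  | zero => simp [W, gdIter]
  | succ t ih =>
    rw [y_step hη0 hη1 hμ0 hμ1 t, ih, hμz]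
    ring

end Traj


/- ===== regularizer-side lemmas and the main proof ===== -/

set_option maxHeartbeats 2000000 in
theorem stmt0 :
    ∃ c₁ > (0 : ℝ), ∃ c₂ > (0 : ℝ),
      ∀ (lam : ℝ), 0 < lam →
      ∀ r : Euc 2 → ℝ,
        LipschitzOnWith 1 r (closedBall 0 5) →
        StronglyConvexOn' (closedBall 0 5) lam r →
        ∃ F : Euc 2 → ℝ, ∃ wr ∈ closedBall (0 : Euc 2) 5,
          (∀ w ∈ closedBall (0 : Euc 2) 5, 0 ≤ F w) ∧
          ConvexOn ℝ (closedBall 0 5) F ∧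
          LipschitzOnWith 1 F (closedBall 0 5) ∧
          LipschitzOnWith 1 (fun w => gradient F w) (closedBall 0 5) ∧
          ∀ (T : ℕ) (η : ℝ), 1 / (T : ℝ) ^ 2 < η → η < 1 → c₁ / (lam * η) ≤ (T : ℝ) →
            F wr ≤ F (gdOut F η T) ∧
            r wr ≤ r (gdOut F η T) - c₂ * lam := by
  refine ⟨10^6, by norm_num, 1/20000, by norm_num, ?_⟩
  intro lam hlam r hLip hSC
  -- basic membership facts
  have hmemB : ∀ w : Euc 2, ‖w‖ ≤ 5 → w ∈ closedBall (0 : Euc 2) 5 := by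
    intro w hw; simpa [mem_closedBall, dist_zero_right] using hw
  have hnormB : ∀ w : Euc 2, w ∈ closedBall (0 : Euc 2) 5 → ‖w‖ ≤ 5 := by
    intro w hw; simpa [mem_closedBall, dist_zero_right] using hw
  have h0B : (0 : Euc 2) ∈ closedBall (0 : Euc 2) 5 := by
    simpa using mem_closedBall_self (by norm_num : (0:ℝ) ≤ 5)
  have hrLip : ∀ x ∈ closedBall (0 : Euc 2) 5, ∀ y ∈ closedBall (0 : Euc 2) 5,
      |r x - r y| ≤ ‖x - y‖ := by
    intro x hx y hy
    have := hLip.dist_le_mul x hx y hy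
    simpa [Real.dist_eq, dist_eq_norm] using this
  -- lam ≤ 1/5
  have hlam5 : lam ≤ 1/5 := by
    set p : Euc 2 := vec2 5 0 with hp
    have hpn : ‖p‖ ≤ 5 := euc_norm_le (by norm_num) (by rw [hp, vec2_apply0, vec2_apply1]; norm_num)
    have hpsq : ‖p‖^2 = 25 := by rw [euc_norm_sq, hp, vec2_apply0, vec2_apply1]; norm_num
    have hpB : p ∈ closedBall (0 : Euc 2) 5 := hmemB p hpn
    have hnp : (-p) ∈ closedBall (0 : Euc 2) 5 := by
      apply hmemB; rw [norm_neg]; exact hpn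
    have h1 := hSC p hpB 0 h0B
    have h2 := hSC (-p) hnp 0 h0B
    rw [sub_zero] at h1 h2
    rw [inner_neg_right] at h2
    have hnn : ‖-p‖^2 = 25 := by rw [norm_neg, hpsq]
    rw [hpsq] at h1
    rw [hnn] at h2
    have l1 : |r p - r 0| ≤ 5 := by
      have := hrLip p hpB 0 h0B
      simpa [hpsq, sub_zero] using le_trans this (by rw [sub_zero]; exact hpn)
    have l2 : |r (-p) - r 0| ≤ 5 := by
      have := hrLip (-p) hnp 0 h0B
      have h5 : ‖-p - 0‖ ≤ 5 := by rw [sub_zero, norm_neg]; exact hpn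
      exact le_trans this h5
    have a1 : r p - r 0 ≤ 5 := le_trans (le_abs_self _) l1
    have a2 : r (-p) - r 0 ≤ 5 := le_trans (le_abs_self _) l2
    nlinarith [h1, h2]
  -- the minimizer of r over the cap M
  set M : Set (Euc 2) := {w : Euc 2 | ‖w‖ ≤ 5 ∧ 2 ≤ w 0} with hM
  have hMB : M ⊆ closedBall (0 : Euc 2) 5 := fun w hw => hmemB w hw.1
  have ha0M : (vec2 2 0) ∈ M := by
    constructor
    · exact euc_norm_le (by norm_num) (by rw [vec2_apply0, vec2_apply1]; norm_num)
    · rw [vec2_apply0]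
  have hMc : IsCompact M := by
    have hMeq : M = closedBall (0 : Euc 2) 5 ∩ {w : Euc 2 | 2 ≤ w 0} := by
      ext w
      simp only [hM, Set.mem_setOf_eq, Set.mem_inter_iff, mem_closedBall, dist_zero_right]
    rw [hMeq]
    apply IsCompact.inter_right (isCompact_closedBall _ _)
    have : Continuous fun w : Euc 2 => w 0 :=
      (EuclideanSpace.proj (0 : Fin 2) : Euc 2 →L[ℝ] ℝ).continuous
    exact isClosed_le continuous_const this
  have hrcont : ContinuousOn r M := (hLip.continuousOn).mono hMB
  obtain ⟨q, hqM, hqmin⟩ := hMc.exists_isMinOn ⟨vec2 2 0, ha0M⟩ hrcont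
  have hqB : q ∈ closedBall (0 : Euc 2) 5 := hMB hqM
  -- quadratic growth of r over M around q
  have growth : ∀ a ∈ M, r q + (lam/2) * ‖a - q‖^2 ≤ r a := by
    intro a haM
    set m : Euc 2 := (2:ℝ)⁻¹ • (a + q) with hm
    have hm0 : m 0 = (2:ℝ)⁻¹ * (a 0 + q 0) := by rw [hm]; simp; ring
    have hmnorm : ‖m‖ ≤ 5 := by
      rw [hm]
      calc ‖(2:ℝ)⁻¹ • (a + q)‖ = (2:ℝ)⁻¹ * ‖a + q‖ := by
            rw [norm_smul]; norm_num
        _ ≤ (2:ℝ)⁻¹ * (‖a‖ + ‖q‖) := by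
            have := norm_add_le a q; nlinarith
        _ ≤ 5 := by nlinarith [haM.1, hqM.1]
    have hmM : m ∈ M := by
      refine ⟨hmnorm, ?_⟩
      rw [hm0]
      have := haM.2; have := hqM.2
      nlinarith
    have hmB : m ∈ closedBall (0 : Euc 2) 5 := hmemB m hmnorm
    have haB : a ∈ closedBall (0 : Euc 2) 5 := hMB haM
    have h1 := hSC a haB m hmB
    have h2 := hSC q hqB m hmB
    have e1 : a - m = (2:ℝ)⁻¹ • (a - q) := by rw [hm]; module
    have e2 : q - m = -((2:ℝ)⁻¹ • (a - q)) := by rw [hm]; module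
    rw [e1] at h1
    rw [e2, inner_neg_right, norm_neg] at h2
    have hn : ‖(2:ℝ)⁻¹ • (a - q)‖^2 = (1/4) * ‖a - q‖^2 := by
      rw [norm_smul]
      have : ‖(2:ℝ)⁻¹‖ = (2:ℝ)⁻¹ := by norm_num
      rw [this]; ring
    rw [hn] at h1 h2
    have hmin : r q ≤ r m := (isMinOn_iff.mp hqmin) m hmM
    linarith
  -- q's second coordinate: the branch selector
  have hq1abs : |q 1| ≤ 5 := le_trans (abs_le_norm1 q) hqM.1
  -- q is in the zero set of FF μ for any μ
  have hFFq : ∀ μ : ℝ, FF μ q = 0 := by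
    intro μ
    have hq0 : 2 ≤ q 0 := hqM.2
    have hqn : ‖q‖^2 ≤ 25 := by nlinarith [hqM.1, norm_nonneg q]
    have hsq : (q 0)^2 + (q 1)^2 ≤ 25 := by rw [← euc_norm_sq]; exact hqn
    have h21 : (q 1)^2 ≤ 21 := by nlinarith
    have hq1 : -(33/7) ≤ q 1 := by nlinarith
    have hqqq : (3:ℝ)/5 - qq q ≤ 0 := by
      unfold qq; nlinarith
    unfold FF
    rw [Phi_zero_of_nonpos (by norm_num) (by linarith : 2 - q 0 ≤ 0),
      Phi_zero_of_nonpos (by norm_num) hqqq]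
    ring
  -- choose the branch
  rcases le_or_gt (1/50) (|q 1|) with hbig | hsmall
  -- ===== Branch A : μ = 0 =====
  · refine ⟨FF 0, q, hqB, ?_, ?_, ?_, ?_, ?_⟩
    · intro w _; exact FF_nonneg le_rfl w
    · exact (FF_convex le_rfl).subset (Set.subset_univ _) (convex_closedBall _ _)
    · exact (FF_lip le_rfl (by norm_num)).lipschitzOnWith
    · have hfun : (fun w => gradient (FF 0) w) = GG 0 := funext (fun w => gradient_FF 0 w)
      rw [hfun]
      exact (GG_lip le_rfl (by norm_num)).lipschitzOnWith
    · intro T η hη2 hη1 hT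
      have hη0 : 0 < η := lt_of_le_of_lt (by positivity) hη2
      have hμ0 : (0:ℝ) ≤ 0 := le_rfl
      have hμ1 : (0:ℝ) ≤ 4/5 := by norm_num
      have hTpos : (0:ℝ) < T := by
        have h6 : (0:ℝ) < 10^6 / (lam * η) := by positivity
        linarith
      have hTη : 10^6 ≤ (T:ℝ) * (lam * η) := by
        rw [div_le_iff₀ (by positivity)] at hT
        linarith
      
      set out := gdOut (FF 0) η T with houtdef
      have hout : out = (T:ℝ)⁻¹ • ∑ t ∈ Finset.range T, W η 0 t := by
        rw [houtdef]; rfl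
      clear_value out
      have hout0 : out 0 = (T:ℝ)⁻¹ * ∑ t ∈ Finset.range T, W η 0 t 0 := by
        rw [hout]; simp [sum_apply0]
      have hout1 : out 1 = 0 := by
        rw [hout]
        have : ∀ t ∈ Finset.range T, W η 0 t 1 = 0 := fun t _ =>
          y_zero hη0 hη1 hμ0 hμ1 rfl t
        simp [sum_apply1, Finset.sum_congr rfl this]
      -- bounds on out 0
      have hX := fun t => tinv hη0 hη1 hμ0 hμ1 (μ := 0) t
      have hsum2 : ∑ t ∈ Finset.range T, (2 - W η 0 t 0) ≤ 100/η :=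
        sum_d hη0 hη1 hμ0 hμ1 T
      have hsum0 : ∑ t ∈ Finset.range T, (2 - W η 0 t 0)
          = 2 * T - ∑ t ∈ Finset.range T, W η 0 t 0 := by
        rw [Finset.sum_sub_distrib, Finset.sum_const, Finset.card_range]
        push_cast; ring
      have hxlow : ∀ t ∈ Finset.range T, 0 ≤ W η 0 t 0 := fun t _ => (hX t).x0
      have hxhigh : ∀ t ∈ Finset.range T, W η 0 t 0 ≤ 2 := fun t _ => (hX t).x2
      have hSlow : 0 ≤ ∑ t ∈ Finset.range T, W η 0 t 0 := Finset.sum_nonneg hxlow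
      have hShigh : ∑ t ∈ Finset.range T, W η 0 t 0 ≤ 2 * T := by
        calc ∑ t ∈ Finset.range T, W η 0 t 0 ≤ ∑ t ∈ Finset.range T, (2:ℝ) :=
            Finset.sum_le_sum hxhigh
          _ = 2 * T := by rw [Finset.sum_const, Finset.card_range]; push_cast; ring
      have ho0a : 0 ≤ out 0 := by
        rw [hout0]; positivity
      have ho0b : out 0 ≤ 2 := by
        rw [hout0]
        rw [inv_mul_le_iff₀ hTpos]
        linarith
      have hd : 2 - out 0 ≤ (100/10^6) * lam := by
        rw [hout0]
        have key : 2 - (T:ℝ)⁻¹ * ∑ t ∈ Finset.range T, W η 0 t 0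
            = (T:ℝ)⁻¹ * ∑ t ∈ Finset.range T, (2 - W η 0 t 0) := by
          rw [hsum0]
          field_simp
        rw [key]
        have h1 : (T:ℝ)⁻¹ * ∑ t ∈ Finset.range T, (2 - W η 0 t 0) ≤ (T:ℝ)⁻¹ * (100/η) := by
          apply mul_le_mul_of_nonneg_left hsum2 (by positivity)
        have h2 : (T:ℝ)⁻¹ * (100/η) ≤ (100/10^6) * lam := by
          rw [inv_mul_le_iff₀ hTpos]
          rw [div_le_iff₀ hη0]
          nlinarith
        linarith
      -- out in ball
      have houtB : out ∈ closedBall (0 : Euc 2) 5 := by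
        apply hmemB
        apply euc_norm_le (by norm_num)
        rw [hout1]
        nlinarith
      constructor
      · rw [hFFq 0]
        exact FF_nonneg le_rfl _
      · -- the r-inequality
        set a : Euc 2 := vec2 2 0 with ha
        have haM : a ∈ M := ha0M
        have haB : a ∈ closedBall (0 : Euc 2) 5 := hMB haM
        have hgr := growth a haM
        have hdist : ‖out - a‖ ≤ (100/10^6) * lam := by
          apply euc_norm_le (by positivity)
          have e0 : (out - a) 0 = out 0 - 2 := by
            rw [ha]; simp
          have e1 : (out - a) 1 = 0 := by
            rw [ha]; simp [hout1]
          rw [e0, e1]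
          nlinarith
        have hLout : |r (out) - r a| ≤ (100/10^6) * lam :=
          le_trans (hrLip _ houtB a haB) hdist
        have haq : (1/50 : ℝ) ≤ ‖a - q‖ := by
          have h1 : |(a - q) 1| ≤ ‖a - q‖ := abs_le_norm1 _
          have e1 : (a - q) 1 = -(q 1) := by rw [ha]; simp
          rw [e1, abs_neg] at h1
          linarith
        have haq2 : (1/50 : ℝ)^2 ≤ ‖a - q‖^2 := by
          nlinarith [norm_nonneg (a - q)]
        have hfin1 : r a - r (out) ≤ (100/10^6) * lam := by
          rw [abs_sub_comm] at hLout
          linarith [le_abs_self (r a - r (out))]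
        nlinarith [hgr, hfin1, haq2]
  -- ===== Branch B : μ = 4/5 =====
  · refine ⟨FF (4/5), q, hqB, ?_, ?_, ?_, ?_, ?_⟩
    · intro w _; exact FF_nonneg (by norm_num) w
    · exact (FF_convex (by norm_num)).subset (Set.subset_univ _) (convex_closedBall _ _)
    · exact (FF_lip (by norm_num) le_rfl).lipschitzOnWith
    · have hfun : (fun w => gradient (FF (4/5)) w) = GG (4/5) :=
        funext (fun w => gradient_FF (4/5) w)
      rw [hfun]
      exact (GG_lip (by norm_num) le_rfl).lipschitzOnWith
    · intro T η hη2 hη1 hT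
      have hη0 : 0 < η := lt_of_le_of_lt (by positivity) hη2
      have hμ0 : (0:ℝ) ≤ 4/5 := by norm_num
      have hμ1 : (4/5:ℝ) ≤ 4/5 := le_rfl
      have hTpos : (0:ℝ) < T := by
        have h6 : (0:ℝ) < 10^6 / (lam * η) := by positivity
        linarith
      have hTη : 10^6 ≤ (T:ℝ) * (lam * η) := by
        rw [div_le_iff₀ (by positivity)] at hT
        linarith
      have hTη5 : 5 * 10^6 ≤ (T:ℝ) * η := by
        nlinarith [hTη, hlam5, hη0.le, hTpos.le]
      
      set out := gdOut (FF (4/5)) η T with houtdef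
      have hout : out = (T:ℝ)⁻¹ • ∑ t ∈ Finset.range T, W η (4/5) t := by
        rw [houtdef]; rfl
      clear_value out
      have hout0 : out 0 = (T:ℝ)⁻¹ * ∑ t ∈ Finset.range T, W η (4/5) t 0 := by
        rw [hout]; simp [sum_apply0]
      have hout1 : out 1 = (T:ℝ)⁻¹ * ∑ t ∈ Finset.range T, W η (4/5) t 1 := by
        rw [hout]; simp [sum_apply1]
      have hX := fun t => tinv hη0 hη1 hμ0 hμ1 (μ := 4/5) t
      -- bounds on coordinates of the output
      have hsum2 : ∑ t ∈ Finset.range T, (2 - W η (4/5) t 0) ≤ 100/η :=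
        sum_d hη0 hη1 hμ0 hμ1 T
      have hsum0 : ∑ t ∈ Finset.range T, (2 - W η (4/5) t 0)
          = 2 * T - ∑ t ∈ Finset.range T, W η (4/5) t 0 := by
        rw [Finset.sum_sub_distrib, Finset.sum_const, Finset.card_range]
        push_cast; ring
      have hSlow : 0 ≤ ∑ t ∈ Finset.range T, W η (4/5) t 0 :=
        Finset.sum_nonneg (fun t _ => (hX t).x0)
      have hShigh : ∑ t ∈ Finset.range T, W η (4/5) t 0 ≤ 2 * T := by
        calc ∑ t ∈ Finset.range T, W η (4/5) t 0 ≤ ∑ t ∈ Finset.range T, (2:ℝ) :=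
            Finset.sum_le_sum (fun t _ => (hX t).x2)
          _ = 2 * T := by rw [Finset.sum_const, Finset.card_range]; push_cast; ring
      have hYlow : 0 ≤ ∑ t ∈ Finset.range T, W η (4/5) t 1 :=
        Finset.sum_nonneg (fun t _ => (hX t).y0)
      have hYhigh : ∑ t ∈ Finset.range T, W η (4/5) t 1 ≤ (3/5) * T := by
        calc ∑ t ∈ Finset.range T, W η (4/5) t 1 ≤ ∑ t ∈ Finset.range T, (3/5:ℝ) :=
            Finset.sum_le_sum (fun t _ => (hX t).y35)
          _ = (3/5) * T := by rw [Finset.sum_const, Finset.card_range]; push_cast; ring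
      have ho0a : 0 ≤ out 0 := by rw [hout0]; positivity
      have ho0b : out 0 ≤ 2 := by
        rw [hout0, inv_mul_le_iff₀ hTpos]; linarith
      have ho1a : 0 ≤ out 1 := by rw [hout1]; positivity
      have ho1b : out 1 ≤ 3/5 := by
        rw [hout1, inv_mul_le_iff₀ hTpos]; linarith
      have hd : 2 - out 0 ≤ (100/10^6) * lam := by
        rw [hout0]
        have key : 2 - (T:ℝ)⁻¹ * ∑ t ∈ Finset.range T, W η (4/5) t 0
            = (T:ℝ)⁻¹ * ∑ t ∈ Finset.range T, (2 - W η (4/5) t 0) := by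
          rw [hsum0]; field_simp
        rw [key]
        have h1 : (T:ℝ)⁻¹ * ∑ t ∈ Finset.range T, (2 - W η (4/5) t 0)
            ≤ (T:ℝ)⁻¹ * (100/η) :=
          mul_le_mul_of_nonneg_left hsum2 (by positivity)
        have h2 : (T:ℝ)⁻¹ * (100/η) ≤ (100/10^6) * lam := by
          rw [inv_mul_le_iff₀ hTpos, div_le_iff₀ hη0]
          nlinarith
        linarith
      have houtB : out ∈ closedBall (0 : Euc 2) 5 := by
        apply hmemB
        apply euc_norm_le (by norm_num)
        nlinarith
      -- lower bound on out 1
      set N₀ : ℕ := Nat.ceil (5/(4*η)) with hN₀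
      have hN₀ge : 5/(4*η) ≤ (N₀:ℝ) := Nat.le_ceil _
      have hN₀lt : (N₀:ℝ) < 5/(4*η) + 1 := Nat.ceil_lt_add_one (by positivity)
      have hN₀η : (N₀:ℝ) * η ≤ 9/4 := by
        have h1 : (N₀:ℝ) * η < (5/(4*η) + 1) * η := by
          apply mul_lt_mul_of_pos_right hN₀lt hη0
        have h2 : (5/(4*η) + 1) * η = 5/4 + η := by field_simp
        nlinarith
      have hYN : 11/200 ≤ W η (4/5) N₀ 1 :=
        Y_lb hη0 hη1 hμ0 hμ1 rfl hN₀ge hN₀η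
      have hN₀T : N₀ ≤ T := by
        have : (N₀:ℝ) ≤ (T:ℝ) := by nlinarith [hN₀η, hTη5, hη0]
        exact_mod_cast this
      have hTN11 : 11 * (N₀:ℝ) ≤ (T:ℝ) := by
        nlinarith [hN₀η, hTη5, hη0]
      have hsumY : (11/200) * ((T:ℝ) - N₀) ≤ ∑ t ∈ Finset.range T, W η (4/5) t 1 := by
        have hsub : Finset.Ico N₀ T ⊆ Finset.range T := by
          intro t ht
          rw [Finset.mem_Ico] at ht
          exact Finset.mem_range.mpr ht.2
        have h1 : ∑ t ∈ Finset.Ico N₀ T, W η (4/5) t 1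
            ≤ ∑ t ∈ Finset.range T, W η (4/5) t 1 :=
          Finset.sum_le_sum_of_subset_of_nonneg hsub (fun t _ _ => (hX t).y0)
        have h2 : ∀ t ∈ Finset.Ico N₀ T, (11/200 : ℝ) ≤ W η (4/5) t 1 := by
          intro t ht
          rw [Finset.mem_Ico] at ht
          exact le_trans hYN (y_mono hη0 hη1 hμ0 hμ1 ht.1)
        have h3 : (Finset.Ico N₀ T).card • (11/200 : ℝ) ≤ ∑ t ∈ Finset.Ico N₀ T, W η (4/5) t 1 :=
          Finset.card_nsmul_le_sum _ _ _ h2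
        rw [Nat.card_Ico] at h3
        have h4 : ((T - N₀ : ℕ) : ℝ) = (T:ℝ) - N₀ := by
          rw [Nat.cast_sub hN₀T]
        rw [nsmul_eq_mul, h4] at h3
        linarith
      have ho1c : 1/20 ≤ out 1 := by
        rw [hout1]
        rw [le_inv_mul_iff₀ hTpos]
        calc (T:ℝ) * (1/20) ≤ (11/200) * ((T:ℝ) - N₀) := by nlinarith
          _ ≤ ∑ t ∈ Finset.range T, W η (4/5) t 1 := hsumY
      constructor
      · rw [hFFq (4/5)]
        exact FF_nonneg (by norm_num) _
      · -- the r-inequality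
        set yb : ℝ := out 1 with hyb
        set a : Euc 2 := vec2 2 yb with ha
        have haM : a ∈ M := by
          constructor
          · apply euc_norm_le (by norm_num)
            rw [ha, vec2_apply0, vec2_apply1]
            nlinarith
          · rw [ha, vec2_apply0]
        have haB : a ∈ closedBall (0 : Euc 2) 5 := hMB haM
        have hgr := growth a haM
        have hdist : ‖out - a‖ ≤ (100/10^6) * lam := by
          apply euc_norm_le (by positivity)
          have e0 : (out - a) 0 = out 0 - 2 := by
            rw [ha]; simp
          have e1 : (out - a) 1 = 0 := by
            rw [ha, hyb]; simp
          rw [e0, e1]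
          nlinarith
        have hLout : |r (out) - r a| ≤ (100/10^6) * lam :=
          le_trans (hrLip _ houtB a haB) hdist
        have hq1lt : q 1 < 1/50 := lt_of_le_of_lt (le_abs_self _) hsmall
        have haq : (3/100 : ℝ) ≤ ‖a - q‖ := by
          have h1 : |(a - q) 1| ≤ ‖a - q‖ := abs_le_norm1 _
          have e1 : (a - q) 1 = yb - q 1 := by rw [ha]; simp
          rw [e1] at h1
          have h2 : (3/100 : ℝ) ≤ yb - q 1 := by
            rw [hyb]; linarith
          linarith [le_abs_self (yb - q 1)]
        have haq2 : (3/100 : ℝ)^2 ≤ ‖a - q‖^2 := by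
          nlinarith [norm_nonneg (a - q)]
        have hfin1 : r a - r (out) ≤ (100/10^6) * lam := by
          rw [abs_sub_comm] at hLout
          linarith [le_abs_self (r a - r (out))]
        nlinarith [hgr, hfin1, haq2]

end
end

section
/- For every constants c > 0 and ρ > 0, there exist two convex ρ-Lipschitz functions f(·; 1) and f(·; −1) on ℝ² such that for every η with c < η < 1, setting v_{z,η} = −η∇f(0; z) for z ∈ {−1, 1}, the following hold: (i) f(v_{1,η}; z) = f(v_{−1,η}; z) for each z ∈ {−1, 1}; (ii) f is differentiable at v_{1,η} and v_{−1,η} with ∇f(v_{1,η}; z) = ∇f(v_{−1,η}; z) = 0 for each z ∈ {−1, 1}; and (iii) ‖v_{1,η} − v_{−1,η}‖ ≥ ρη/4. -/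
/- STATEMENT 12: corollary of the auxiliary construction. There is a pair of convex
   ρ-Lipschitz functions on ℝ² (`true` encodes z = 1, `false` encodes z = −1) such
   that for every c < η < 1, setting v_{z,η} = −η∇f(0; z), the two functions agree at
   v_{1,η} and v_{−1,η}, have vanishing gradient there, and ‖v_{1,η} − v_{−1,η}‖ ≥ ρη/4. -/

open MeasureTheory

noncomputable section

open scoped RealInnerProductSpace

namespace Stmt12Aux

def uu (z : Bool) : Euc 2 := (WithLp.equiv 2 (Fin 2 → ℝ)).symm ![if z then 3/5 else -3/5, 4/5]

lemma inner_uu (z z' : Bool) : ⟪uu z, uu z'⟫ = if z = z' then 1 else 7/25 := by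
  cases z <;> cases z' <;>
    simp [uu, PiLp.inner_apply, Fin.sum_univ_two, RCLike.inner_apply, WithLp.equiv_symm_apply, PiLp.toLp_apply, EuclideanSpace.norm_eq] <;>
    norm_num

lemma inner_uu_ge (z z' : Bool) : (7:ℝ)/25 ≤ ⟪uu z, uu z'⟫ := by
  rw [inner_uu]; split <;> norm_num

lemma norm_uu (z : Bool) : ‖uu z‖ = 1 := by
  have h := inner_uu z z
  rw [if_pos rfl, real_inner_self_eq_norm_sq] at h
  nlinarith [norm_nonneg (uu z)]

lemma norm_uu_sub : ‖uu true - uu false‖ = 6/5 := by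
  rw [EuclideanSpace.norm_eq]
  simp [uu, Fin.sum_univ_two, WithLp.equiv_symm_apply, PiLp.toLp_apply]
  rw [show ((3:ℝ)/5 - -3/5) ^ 2 = (6/5)^2 by norm_num]
  exact Real.sqrt_sq (by norm_num)

lemma convex_f (ρ a : ℝ) (hρ : 0 ≤ ρ) (v : Euc 2) :
    ConvexOn ℝ Set.univ (fun w => ρ * max 0 (a - ⟪v, w⟫)) := by
  have haff : ConvexOn ℝ Set.univ (fun w : Euc 2 => a - ⟪v, w⟫) := by
    refine ⟨convex_univ, ?_⟩
    intro x _ y _ p q hp hq hpq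
    simp only [inner_add_right, real_inner_smul_right, smul_eq_mul]
    apply le_of_eq
    linear_combination (-a) * hpq
  have hmax : ConvexOn ℝ Set.univ (fun w : Euc 2 => max 0 (a - ⟪v, w⟫)) := by
    have := (convexOn_const (0:ℝ) convex_univ).sup haff
    exact this
  have := hmax.smul hρ
  simpa [smul_eq_mul] using this

lemma lipschitz_f (ρ a : ℝ) (hρ : 0 ≤ ρ) (v : Euc 2) (hv : ‖v‖ = 1) :
    LipschitzWith ρ.toNNReal (fun w => ρ * max 0 (a - ⟪v, w⟫)) := by
  refine LipschitzWith.of_dist_le_mul fun x y => ?_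
  rw [Real.dist_eq]
  have h1 : |ρ * max 0 (a - ⟪v, x⟫) - ρ * max 0 (a - ⟪v, y⟫)|
      = ρ * |max 0 (a - ⟪v, x⟫) - max 0 (a - ⟪v, y⟫)| := by
    rw [← mul_sub, abs_mul, abs_of_nonneg hρ]
  have h2 : |max 0 (a - ⟪v, x⟫) - max 0 (a - ⟪v, y⟫)| ≤ |(a - ⟪v, x⟫) - (a - ⟪v, y⟫)| := by
    rw [max_comm 0 (a - ⟪v, x⟫), max_comm 0 (a - ⟪v, y⟫)]
    exact abs_max_sub_max_le_abs _ _ _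
  have h3 : |(a - ⟪v, x⟫) - (a - ⟪v, y⟫)| = |⟪v, y - x⟫| := by
    rw [inner_sub_right]; ring_nf
  have h4 : |⟪v, y - x⟫| ≤ ‖v‖ * ‖y - x‖ := abs_real_inner_le_norm v (y - x)
  have h5 : ‖v‖ * ‖y - x‖ = dist x y := by
    rw [hv, one_mul, dist_eq_norm, norm_sub_rev]
  have hcoe : (ρ.toNNReal : ℝ) = ρ := Real.coe_toNNReal ρ hρ
  calc |ρ * max 0 (a - ⟪v, x⟫) - ρ * max 0 (a - ⟪v, y⟫)|
      ≤ ρ * dist x y := by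
        rw [h1]
        exact mul_le_mul_of_nonneg_left (h2.trans (h3.le.trans (h4.trans h5.le))) hρ
    _ = (ρ.toNNReal : ℝ) * dist x y := by rw [hcoe]

lemma hga_affine (b : ℝ) (g x : Euc 2) : HasGradientAt (fun w : Euc 2 => b + ⟪g, w⟫) g x := by
  rw [hasGradientAt_iff_hasFDerivAt]
  have h : HasFDerivAt (fun w : Euc 2 => b + (InnerProductSpace.toDual ℝ (Euc 2) g) w)
      (InnerProductSpace.toDual ℝ (Euc 2) g) x := by
    have h0 := (hasFDerivAt_const b x).add ((InnerProductSpace.toDual ℝ (Euc 2) g).hasFDerivAt (x := x))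
    rw [zero_add] at h0
    exact h0
  simpa [InnerProductSpace.toDual_apply_apply] using h

lemma grad_pos (ρ a : ℝ) (v x : Euc 2) (hx : ⟪v, x⟫ < a) :
    HasGradientAt (fun w => ρ * max 0 (a - ⟪v, w⟫)) ((-ρ) • v) x := by
  have hopen : IsOpen {w : Euc 2 | ⟪v, w⟫ < a} :=
    isOpen_lt (continuous_const.inner continuous_id) continuous_const
  have hev : ∀ᶠ w in nhds x, ⟪v, w⟫ < a := hopen.eventually_mem hx
  have hev' : (fun w => ρ * max 0 (a - ⟪v, w⟫)) =ᶠ[nhds x]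
      (fun w : Euc 2 => ρ * a + ⟪(-ρ) • v, w⟫) := by
    filter_upwards [hev] with w hw
    rw [max_eq_right (by linarith), real_inner_smul_left]
    ring
  exact (hga_affine (ρ * a) ((-ρ) • v) x).congr_of_eventuallyEq hev'

lemma grad_neg (ρ a : ℝ) (v x : Euc 2) (hx : a < ⟪v, x⟫) :
    HasGradientAt (fun w => ρ * max 0 (a - ⟪v, w⟫)) 0 x := by
  have hopen : IsOpen {w : Euc 2 | a < ⟪v, w⟫} :=
    isOpen_lt continuous_const (continuous_const.inner continuous_id)
  have hev : ∀ᶠ w in nhds x, a < ⟪v, w⟫ := hopen.eventually_mem hx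
  have hev' : (fun w => ρ * max 0 (a - ⟪v, w⟫)) =ᶠ[nhds x] (fun _ : Euc 2 => (0:ℝ)) := by
    filter_upwards [hev] with w hw
    rw [max_eq_left (by linarith)]
    ring
  exact (hasGradientAt_const x (0:ℝ)).congr_of_eventuallyEq hev'

end Stmt12Aux

open Stmt12Aux

theorem stmt12 (c ρ : ℝ) (hc : 0 < c) (hρ : 0 < ρ) :
    ∃ f : Bool → Euc 2 → ℝ,
      (∀ z : Bool, ConvexOn ℝ Set.univ (f z) ∧ LipschitzWith ρ.toNNReal (f z)) ∧
      (∀ z : Bool, DifferentiableAt ℝ (f z) 0) ∧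
      ∀ η : ℝ, c < η → η < 1 →
        (∀ z : Bool,
          f z (-(η • gradient (f true) 0)) = f z (-(η • gradient (f false) 0))) ∧
        (∀ z z' : Bool, HasGradientAt (f z) 0 (-(η • gradient (f z') 0))) ∧
        ρ * η / 4 ≤ ‖(-(η • gradient (f true) 0)) - (-(η • gradient (f false) 0))‖ := by
  set a : ℝ := 7 * c * ρ / 50 with ha_def
  have ha : 0 < a := by positivity
  refine ⟨fun z w => ρ * max 0 (a - ⟪uu z, w⟫), ?_, ?_, ?_⟩
  · exact fun z => ⟨convex_f ρ a hρ.le (uu z), lipschitz_f ρ a hρ.le (uu z) (norm_uu z)⟩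
  · intro z
    have h := grad_pos ρ a (uu z) 0 (by simpa using ha)
    exact h.hasFDerivAt.differentiableAt
  · intro η hcη hη1
    have hgrad0 : ∀ z, gradient (fun w => ρ * max 0 (a - ⟪uu z, w⟫)) 0 = (-ρ) • uu z :=
      fun z => (grad_pos ρ a (uu z) 0 (by simpa using ha)).gradient
    have hp : ∀ z : Bool,
        -(η • gradient (fun w => ρ * max 0 (a - ⟪uu z, w⟫)) 0) = (η * ρ) • uu z := by
      intro z
      rw [hgrad0 z, smul_smul, ← neg_smul]
      congr 1
      ring
    have hkey : ∀ z z' : Bool, a < (η * ρ) * ⟪uu z, uu z'⟫ := by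
      intro z z'
      have h1 := inner_uu_ge z z'
      have h2 : 0 < η * ρ := by nlinarith
      calc a = (7/25) * (c/2) * ρ := by rw [ha_def]; ring
        _ < (7/25) * η * ρ := by nlinarith
        _ ≤ (η * ρ) * ⟪uu z, uu z'⟫ := by nlinarith
    have hval : ∀ z z' : Bool,
        ρ * max 0 (a - ⟪uu z, (η * ρ) • uu z'⟫) = 0 := by
      intro z z'
      have := hkey z z'
      rw [real_inner_smul_right, max_eq_left (by linarith)]
      ring
    refine ⟨?_, ?_, ?_⟩
    · intro z
      simp only [hp, hval]
    · intro z z'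
      rw [hp z']
      exact grad_neg ρ a (uu z) _ (by rw [real_inner_smul_right]; exact hkey z z')
    · rw [hp true, hp false, ← smul_sub, norm_smul, norm_uu_sub, Real.norm_eq_abs,
        abs_of_pos (by nlinarith)]
      nlinarith

end
end
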